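/- Define the Shapley-type operator T_1 on Q-functions Q_1 : S → R^{|A_1| × Σ_{i≠1}|A_i|} (viewed as tuples (Q_{1,i}(s))_{i≠1}) by (T_1 Q_1)(s, a_1, a_i) = r_{1,i}(s, a_1, a_i) + γ Σ_{s'} (1/(n−1)) P_1(s'|s, a_1) · Val_1(Q_1(s')), where Val_1(Q_1(s)) = max_{μ_1∈Δ(A_1)} min_{(μ_i)_{i≠1}} Σ_{i≠1} μ_1^T Q_{1,i}(s) μ_i. Then T_1 is a γ-contraction with respect to the norm ‖Q‖ = max_{s∈S} Σ_{i≠1} ‖Q_{1,i}(s)‖_max, where ‖·‖_max is the entrywise max-absolute-value norm. -/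
import Mathlib


/-- The max-min value of a star-shaped polymatrix stage game:
`Val₁(Q) = max_{μ₁ ∈ Δ(B)} min_{(ρ_i)_i ∈ Π_i Δ(A_i)} ∑_i μ₁ᵀ Q_{1,i} ρ_i`. -/
noncomputable def polyVal {B I : Type*} [Fintype B] [Fintype I]
    (A : I → Type*) [∀ i, Fintype (A i)]
    (Q : ∀ i, B → A i → ℝ) : ℝ :=
  ⨆ μ : {p : B → ℝ // p ∈ stdSimplex ℝ B},
    ⨅ ρ : ∀ i, {p : A i → ℝ // p ∈ stdSimplex ℝ (A i)},
      ∑ i, ∑ b, ∑ a, μ.1 b * Q i b a * (ρ i).1 a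


section aux

lemma bilin_bound {B A : Type*} [Fintype B] [Fintype A]
    {μ : B → ℝ} (hμ : μ ∈ stdSimplex ℝ B) {ρ : A → ℝ} (hρ : ρ ∈ stdSimplex ℝ A)
    (X : B → A → ℝ) (M : ℝ) (hX : ∀ b a, |X b a| ≤ M) :
    |∑ b, ∑ a, μ b * X b a * ρ a| ≤ M := by
  calc |∑ b, ∑ a, μ b * X b a * ρ a| ≤ ∑ b, ∑ a, |μ b * X b a * ρ a| := by
        refine (Finset.abs_sum_le_sum_abs _ _).trans ?_
        exact Finset.sum_le_sum fun b _ => Finset.abs_sum_le_sum_abs _ _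
    _ ≤ ∑ b, ∑ a, μ b * M * ρ a := by
        refine Finset.sum_le_sum fun b _ => Finset.sum_le_sum fun a _ => ?_
        rw [abs_mul, abs_mul, abs_of_nonneg (hμ.1 b), abs_of_nonneg (hρ.1 a)]
        exact mul_le_mul_of_nonneg_right
          (mul_le_mul_of_nonneg_left (hX b a) (hμ.1 b)) (hρ.1 a)
    _ = M := by
        simp_rw [← Finset.mul_sum, hρ.2, mul_one, ← Finset.sum_mul, hμ.2, one_mul]

lemma le_supsup {B A : Type*} [Fintype B] [Fintype A] (X : B → A → ℝ) (b : B) (a : A) :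
    |X b a| ≤ ⨆ b, ⨆ a, |X b a| := by
  have h1 : |X b a| ≤ ⨆ a, |X b a| :=
    le_ciSup (f := fun a => |X b a|) (Set.Finite.bddAbove (Set.finite_range _)) a
  exact h1.trans (le_ciSup (f := fun b => ⨆ a, |X b a|)
    (Set.Finite.bddAbove (Set.finite_range _)) b)

lemma supsup_nonneg {B A : Type*} [Fintype B] [Nonempty B] [Fintype A] [Nonempty A]
    (X : B → A → ℝ) : 0 ≤ ⨆ b, ⨆ a, |X b a| :=
  (abs_nonneg _).trans (le_supsup X (Classical.arbitrary B) (Classical.arbitrary A))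

instance stdSimplexNonempty {B : Type*} [Fintype B] [Nonempty B] :
    Nonempty {p : B → ℝ // p ∈ stdSimplex ℝ B} := by
  classical
  exact ⟨⟨_, single_mem_stdSimplex ℝ (Classical.arbitrary B)⟩⟩

end aux

/-- The norm `‖Q‖ = max_{s∈S} ∑_{i≠1} ‖Q_{1,i}(s)‖_max` on Q-functions. -/
noncomputable def qNorm {S B I : Type*} [Fintype S] [Nonempty S] [Fintype B] [Fintype I]
    (A : I → Type*) [∀ i, Fintype (A i)]
    (Q : S → ∀ i, B → A i → ℝ) : ℝ :=
  ⨆ s : S, ∑ i, ⨆ b, ⨆ a, |Q s i b a|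

/-- The Shapley-type operator
`(T₁ Q)(s, a₁, a_i) = r_{1,i}(s,a₁,a_i) + γ ∑_{s'} (1/(n−1)) P₁(s'|s,a₁) · Val₁(Q(s'))`. -/
noncomputable def shapleyT {S B I : Type*} [Fintype S] [Fintype B] [Fintype I]
    (A : I → Type*) [∀ i, Fintype (A i)]
    (γ : ℝ) (P1 : S → B → S → ℝ) (rwd : ∀ i : I, S → B → A i → ℝ)
    (Q : S → ∀ i, B → A i → ℝ) : S → ∀ i, B → A i → ℝ :=
  fun s i b a => rwd i s b a +
    γ * ∑ s', (1 / (Fintype.card I : ℝ)) * P1 s b s' * polyVal A (Q s')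


section aux2

variable {B I : Type*} [Fintype B] [Nonempty B] [Fintype I]
  (A : I → Type*) [∀ i, Fintype (A i)] [∀ i, Nonempty (A i)]

omit [Nonempty B] [∀ i, Nonempty (A i)] in
lemma F_abs_le (Q : ∀ i, B → A i → ℝ) (μ : {p : B → ℝ // p ∈ stdSimplex ℝ B})
    (ρ : ∀ i, {p : A i → ℝ // p ∈ stdSimplex ℝ (A i)}) :
    |∑ i, ∑ b, ∑ a, μ.1 b * Q i b a * (ρ i).1 a| ≤ ∑ i, ⨆ b, ⨆ a, |Q i b a| := by
  refine (Finset.abs_sum_le_sum_abs _ _).trans (Finset.sum_le_sum fun i _ => ?_)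
  exact bilin_bound μ.2 (ρ i).2 _ _ (fun b a => le_supsup _ b a)

omit [Nonempty B] [∀ i, Nonempty (A i)] in
lemma F_bddBelow (Q : ∀ i, B → A i → ℝ) (μ : {p : B → ℝ // p ∈ stdSimplex ℝ B}) :
    BddBelow (Set.range fun ρ : ∀ i, {p : A i → ℝ // p ∈ stdSimplex ℝ (A i)} =>
      ∑ i, ∑ b, ∑ a, μ.1 b * Q i b a * (ρ i).1 a) := by
  refine ⟨-∑ i, ⨆ b, ⨆ a, |Q i b a|, ?_⟩
  rintro x ⟨ρ, rfl⟩
  exact neg_le_of_abs_le (F_abs_le A Q μ ρ)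

lemma polyVal_sub_le (Q Q' : ∀ i, B → A i → ℝ) :
    polyVal A Q - polyVal A Q' ≤ ∑ i, ⨆ b, ⨆ a, |Q i b a - Q' i b a| := by
  set c := ∑ i, ⨆ b, ⨆ a, |Q i b a - Q' i b a| with hc
  rw [sub_le_iff_le_add, polyVal]
  refine ciSup_le fun μ => ?_
  have step2 : (⨅ ρ : ∀ i, {p : A i → ℝ // p ∈ stdSimplex ℝ (A i)},
      ∑ i, ∑ b, ∑ a, μ.1 b * Q' i b a * (ρ i).1 a) ≤ polyVal A Q' := by
    refine le_ciSup (f := fun μ : {p : B → ℝ // p ∈ stdSimplex ℝ B} =>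
      ⨅ ρ : ∀ i, {p : A i → ℝ // p ∈ stdSimplex ℝ (A i)},
        ∑ i, ∑ b, ∑ a, μ.1 b * Q' i b a * (ρ i).1 a) ?_ μ
    refine ⟨∑ i, ⨆ b, ⨆ a, |Q' i b a|, ?_⟩
    rintro x ⟨ν, rfl⟩
    refine (ciInf_le (F_bddBelow A Q' ν) (Classical.arbitrary _)).trans ?_
    exact (le_abs_self _).trans (F_abs_le A Q' ν _)
  have step1 : (⨅ ρ : ∀ i, {p : A i → ℝ // p ∈ stdSimplex ℝ (A i)},
      ∑ i, ∑ b, ∑ a, μ.1 b * Q i b a * (ρ i).1 a) - c ≤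
      ⨅ ρ : ∀ i, {p : A i → ℝ // p ∈ stdSimplex ℝ (A i)},
      ∑ i, ∑ b, ∑ a, μ.1 b * Q' i b a * (ρ i).1 a := by
    refine le_ciInf fun ρ => ?_
    rw [sub_le_iff_le_add]
    have h1 : (⨅ ρ : ∀ i, {p : A i → ℝ // p ∈ stdSimplex ℝ (A i)},
        ∑ i, ∑ b, ∑ a, μ.1 b * Q i b a * (ρ i).1 a) ≤
        ∑ i, ∑ b, ∑ a, μ.1 b * Q i b a * (ρ i).1 a :=
      ciInf_le (F_bddBelow A Q μ) ρ
    refine h1.trans ?_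
    have h2 : ∑ i, ∑ b, ∑ a, μ.1 b * Q i b a * (ρ i).1 a -
        ∑ i, ∑ b, ∑ a, μ.1 b * Q' i b a * (ρ i).1 a =
        ∑ i, ∑ b, ∑ a, μ.1 b * (Q i b a - Q' i b a) * (ρ i).1 a := by
      rw [← Finset.sum_sub_distrib]
      refine Finset.sum_congr rfl fun i _ => ?_
      rw [← Finset.sum_sub_distrib]
      refine Finset.sum_congr rfl fun b _ => ?_
      rw [← Finset.sum_sub_distrib]
      exact Finset.sum_congr rfl fun a _ => by ring
    have h3 : ∑ i, ∑ b, ∑ a, μ.1 b * (Q i b a - Q' i b a) * (ρ i).1 a ≤ c := by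
      refine Finset.sum_le_sum fun i _ => ?_
      exact (le_abs_self _).trans (bilin_bound μ.2 (ρ i).2 _ _
        (fun b a => le_supsup (fun b a => Q i b a - Q' i b a) b a))
    rw [← h2] at h3
    linarith
  linarith

lemma polyVal_lipschitz (Q Q' : ∀ i, B → A i → ℝ) :
    |polyVal A Q - polyVal A Q'| ≤ ∑ i, ⨆ b, ⨆ a, |Q i b a - Q' i b a| := by
  rw [abs_sub_le_iff]
  refine ⟨polyVal_sub_le A Q Q', ?_⟩
  have := polyVal_sub_le A Q' Q
  simpa [abs_sub_comm] using this

end aux2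

/-- The operator `T₁` is a γ-contraction in the norm
`‖Q‖ = max_s ∑_{i≠1} ‖Q_{1,i}(s)‖_max`. -/
theorem shapleyT_contraction {S B I : Type*} [Fintype S] [Nonempty S]
    [Fintype B] [Nonempty B] [Fintype I] [Nonempty I]
    (A : I → Type*) [∀ i, Fintype (A i)] [∀ i, Nonempty (A i)]
    (γ : ℝ) (hγ0 : 0 < γ) (hγ1 : γ < 1)
    (P1 : S → B → S → ℝ)
    (hP1nn : ∀ s b s', 0 ≤ P1 s b s') (hP1sum : ∀ s b, ∑ s', P1 s b s' = 1)
    (rwd : ∀ i : I, S → B → A i → ℝ)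
    (Q Q' : S → ∀ i, B → A i → ℝ) :
    qNorm A (fun s i b a =>
        shapleyT A γ P1 rwd Q s i b a - shapleyT A γ P1 rwd Q' s i b a) ≤
      γ * qNorm A (fun s i b a => Q s i b a - Q' s i b a) := by
  classical
  set N := qNorm A (fun s i b a => Q s i b a - Q' s i b a) with hN
  set cI := (Fintype.card I : ℝ) with hcI
  have hcIpos : 0 < cI := by
    simp only [hcI]
    exact_mod_cast Fintype.card_pos
  have key : ∀ s i b (a : A i),
      |shapleyT A γ P1 rwd Q s i b a - shapleyT A γ P1 rwd Q' s i b a| ≤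
        γ * (1 / cI) * N := by
    intro s i b a
    have hsplit : ∑ s', (1 / cI) * P1 s b s' * (polyVal A (Q s') - polyVal A (Q' s')) =
        (∑ s', (1 / cI) * P1 s b s' * polyVal A (Q s')) -
          ∑ s', (1 / cI) * P1 s b s' * polyVal A (Q' s') := by
      rw [← Finset.sum_sub_distrib]
      exact Finset.sum_congr rfl fun _ _ => by ring
    have hdiff : shapleyT A γ P1 rwd Q s i b a - shapleyT A γ P1 rwd Q' s i b a =
        γ * ∑ s', (1 / cI) * P1 s b s' * (polyVal A (Q s') - polyVal A (Q' s')) := by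
      simp only [shapleyT, ← hcI]
      rw [hsplit]
      ring
    rw [hdiff, abs_mul, abs_of_pos hγ0]
    rw [mul_assoc]
    refine mul_le_mul_of_nonneg_left ?_ hγ0.le
    have hterm : ∀ s', |(1 / cI) * P1 s b s' * (polyVal A (Q s') - polyVal A (Q' s'))| ≤
        (1 / cI) * P1 s b s' * N := by
      intro s'
      rw [abs_mul, abs_mul, abs_of_pos (one_div_pos.mpr hcIpos),
        abs_of_nonneg (hP1nn s b s')]
      refine mul_le_mul_of_nonneg_left ?_ (mul_nonneg (one_div_pos.mpr hcIpos).le (hP1nn s b s'))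
      refine (polyVal_lipschitz A (Q s') (Q' s')).trans ?_
      have := le_ciSup (f := fun s : S => ∑ i, ⨆ b, ⨆ a, |Q s i b a - Q' s i b a|)
        (Set.Finite.bddAbove (Set.finite_range _)) s'
      exact this
    calc |∑ s', (1 / cI) * P1 s b s' * (polyVal A (Q s') - polyVal A (Q' s'))|
        ≤ ∑ s', |(1 / cI) * P1 s b s' * (polyVal A (Q s') - polyVal A (Q' s'))| :=
          Finset.abs_sum_le_sum_abs _ _
      _ ≤ ∑ s', (1 / cI) * P1 s b s' * N := Finset.sum_le_sum fun s' _ => hterm s'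
      _ = 1 / cI * N := by
          simp_rw [mul_assoc, ← Finset.mul_sum]
          rw [← Finset.sum_mul, hP1sum s b, one_mul]
  rw [qNorm]
  refine ciSup_le fun s => ?_
  have hsum : ∑ i, (⨆ b, ⨆ a, |shapleyT A γ P1 rwd Q s i b a -
      shapleyT A γ P1 rwd Q' s i b a|) ≤ ∑ i : I, γ * (1 / cI) * N := by
    refine Finset.sum_le_sum fun i _ => ?_
    refine ciSup_le fun b => ciSup_le fun a => key s i b a
  refine hsum.trans ?_
  rw [Finset.sum_const, Finset.card_univ, nsmul_eq_mul, ← hcI]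
  rw [show cI * (γ * (1 / cI) * N) = γ * N * (cI / cI) from by ring,
    div_self hcIpos.ne', mul_one]
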